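/- For 0 < α < 1, m > 1 and β ≥ β₀, and any continuous Y : [0,∞) → [0,1] with Y(0)=1, there exists η* with η₂(β) ≤ η* ≤ η₁(β) and S_β(Y)(η*) = 0. -/

import Mathlib

open Real

/-- The Erdélyi–Kober operator I^{0,1-α}_{-2/α}. -/
noncomputable def EK (α : ℝ) (W : ℝ → ℝ) (η : ℝ) : ℝ :=
  (1 / Real.Gamma (1 - α)) * ∫ s in (0:ℝ)..1, (1 - s) ^ (-α) * W (s ^ (-(α / 2)) * η)

/-- The operator S_β. -/
noncomputable def Sop (α m β : ℝ) (Y : ℝ → ℝ) (η : ℝ) : ℝ :=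
  1 + (m + 1) * (-(β * η) +
    ∫ z in (0:ℝ)..η, ((1 - α / 2) * η - z) * EK α (fun t => Y t ^ (1 / (1 + m))) z)

/-- The root η₁(β). -/
noncomputable def eta1 (α m β : ℝ) : ℝ :=
  4 * β * Real.Gamma (2 - α) / (2 - α) ^ 2 -
    2 * Real.sqrt 2 / ((2 - α) ^ 2 * Real.sqrt (m + 1)) *
      Real.sqrt (2 * β ^ 2 * (m + 1) * Real.Gamma (2 - α) ^ 2 - (2 - α) * Real.Gamma (3 - α))

/-- The root η₂(β). -/
noncomputable def eta2 (α m β : ℝ) : ℝ :=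
  2 * Real.sqrt 2 *
      Real.sqrt (Real.Gamma (2 - α) * (α ^ 2 + 2 * β ^ 2 * (m + 1) * Real.Gamma (2 - α))) /
    (α ^ 2 * Real.sqrt (m + 1)) - 4 * β * Real.Gamma (2 - α) / α ^ 2

open MeasureTheory Set intervalIntegral

/-- Integrability of the singular kernel. -/
lemma kernel_ii {α : ℝ} (hα1 : α < 1) :
    IntervalIntegrable (fun s : ℝ => (1 - s) ^ (-α)) volume 0 1 := by
  have h : IntervalIntegrable (fun s : ℝ => s ^ (-α)) volume 0 1 :=
    intervalIntegrable_rpow' (by linarith)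
  have h2 := (h.comp_sub_left 1).symm
  norm_num at h2
  exact h2

lemma kernel_int {α : ℝ} (hα1 : α < 1) :
    ∫ s in (0:ℝ)..1, (1 - s) ^ (-α) = 1 / (1 - α) := by
  rw [intervalIntegral.integral_comp_sub_left (fun x : ℝ => x ^ (-α)) 1]
  norm_num
  rw [integral_rpow (Or.inl (by linarith))]
  rw [Real.one_rpow, Real.zero_rpow (by intro h; linarith [neg_add_eq_zero.mp h] : -α + 1 ≠ 0)]
  rw [show -α + 1 = 1 - α by ring]
  ring

/-- Continuity and bounds for the Erdélyi–Kober operator. -/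
lemma EK_props {α : ℝ} (hα : 0 < α) (hα1 : α < 1) {W : ℝ → ℝ}
    (hW : Continuous W) (hW0 : ∀ t, 0 ≤ W t) (hW1 : ∀ t, W t ≤ 1) :
    Continuous (EK α W) ∧ ∀ z, 0 ≤ EK α W z ∧ EK α W z ≤ 1 / Real.Gamma (2 - α) := by
  have hΓpos : 0 < Real.Gamma (1 - α) := Real.Gamma_pos_of_pos (by linarith)
  have hbnd := kernel_ii hα1
  set F : ℝ → ℝ → ℝ := fun z s => (1 - s) ^ (-α) * W (s ^ (-(α/2)) * z) with hF
  have huIoc : Set.uIoc (0:ℝ) 1 = Set.Ioc (0:ℝ) 1 := Set.uIoc_of_le zero_le_one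
  have hmeas : ∀ z, AEStronglyMeasurable (F z) (volume.restrict (Set.uIoc (0:ℝ) 1)) := by
    intro z
    rw [huIoc, ← MeasureTheory.Measure.restrict_congr_set MeasureTheory.Ioo_ae_eq_Ioc]
    apply ContinuousOn.aestronglyMeasurable _ measurableSet_Ioo
    intro s hs
    apply ContinuousAt.continuousWithinAt
    have h1 : ContinuousAt (fun s : ℝ => (1 - s) ^ (-α)) s := by
      apply ContinuousAt.rpow_const
      · exact (continuous_const.sub continuous_id).continuousAt
      · left; intro h; linarith [hs.2]
    have h2 : ContinuousAt (fun s : ℝ => W (s ^ (-(α/2)) * z)) s := by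
      apply hW.continuousAt.comp
      exact (continuousAt_id.rpow_const (Or.inl (ne_of_gt hs.1))).mul continuousAt_const
    exact h1.mul h2
  have hFbound : ∀ z : ℝ, ∀ s ∈ Set.Ioc (0:ℝ) 1, ‖F z s‖ ≤ (1 - s) ^ (-α) := by
    intro z s hs
    have h1s : (0:ℝ) ≤ 1 - s := by linarith [hs.2]
    have hp : 0 ≤ (1 - s) ^ (-α) := Real.rpow_nonneg h1s _
    rw [norm_mul, Real.norm_eq_abs, Real.norm_eq_abs, abs_of_nonneg hp,
      abs_of_nonneg (hW0 _)]
    exact mul_le_of_le_one_right hp (hW1 _)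
  have hFnonneg : ∀ z : ℝ, ∀ s ∈ Set.Icc (0:ℝ) 1, 0 ≤ F z s := by
    intro z s hs
    exact mul_nonneg (Real.rpow_nonneg (by linarith [hs.2]) _) (hW0 _)
  have hFle : ∀ z : ℝ, ∀ s ∈ Set.Icc (0:ℝ) 1, F z s ≤ (1 - s) ^ (-α) := by
    intro z s hs
    exact mul_le_of_le_one_right (Real.rpow_nonneg (by linarith [hs.2]) _) (hW1 _)
  have hFi : ∀ z, IntervalIntegrable (F z) volume 0 1 := by
    intro z
    apply hbnd.mono_fun' (hmeas z)
    rw [huIoc]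
    filter_upwards [MeasureTheory.ae_restrict_mem measurableSet_Ioc] with s hs
    exact hFbound z s hs
  have hcont : Continuous fun z => ∫ s in (0:ℝ)..1, F z s := by
    apply intervalIntegral.continuous_of_dominated_interval hmeas _ hbnd
    · apply Filter.Eventually.of_forall
      intro s _
      exact continuous_const.mul (hW.comp (continuous_const.mul continuous_id))
    · intro z
      apply Filter.Eventually.of_forall
      intro s hs
      rw [huIoc] at hs
      exact hFbound z s hs
  constructor
  · exact continuous_const.mul hcont
  · intro z
    have h0 : 0 ≤ ∫ s in (0:ℝ)..1, F z s :=
      intervalIntegral.integral_nonneg zero_le_one (hFnonneg z)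
    have h1 : (∫ s in (0:ℝ)..1, F z s) ≤ 1 / (1 - α) := by
      rw [← kernel_int hα1]
      exact intervalIntegral.integral_mono_on zero_le_one (hFi z) hbnd (hFle z)
    have hG2 : Real.Gamma (2 - α) = (1 - α) * Real.Gamma (1 - α) := by
      rw [show (2:ℝ) - α = (1 - α) + 1 by ring]
      exact Real.Gamma_add_one (by intro h; rw [h] at hΓpos; linarith [hΓpos, Real.Gamma_zero] : (1:ℝ) - α ≠ 0)
    constructor
    · exact mul_nonneg (by positivity) h0
    · show (1 / Real.Gamma (1 - α)) * (∫ s in (0:ℝ)..1, F z s) ≤ 1 / Real.Gamma (2 - α)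
      rw [hG2]
      calc (1 / Real.Gamma (1 - α)) * (∫ s in (0:ℝ)..1, F z s)
          ≤ (1 / Real.Gamma (1 - α)) * (1 / (1 - α)) := by
            apply mul_le_mul_of_nonneg_left h1 (by positivity)
        _ = 1 / ((1 - α) * Real.Gamma (1 - α)) := by
            rw [div_mul_div_comm, one_mul, mul_comm]
  done

lemma linear_int (a b C D : ℝ) :
    (∫ z in a..b, (C - z) * D) = (C * (b - a) - (b^2 - a^2)/2) * D := by
  have h : (fun z : ℝ => (C - z) * D) = fun z => C * D - D * z := by ext z; ring
  rw [h, intervalIntegral.integral_sub (f := fun _ => C * D) (g := fun z => D * z) (_root_.intervalIntegrable_const)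
    ((continuous_const.mul continuous_id : Continuous fun z : ℝ => D * z).intervalIntegrable a b),
    intervalIntegral.integral_const, intervalIntegral.integral_const_mul, integral_id]
  simp only [smul_eq_mul]
  ring

/-- Sandwich bounds for the weighted integral. -/
lemma key_bounds {E : ℝ → ℝ} (hE : Continuous E) {K : ℝ}
    (hE0 : ∀ z, 0 ≤ E z) (hE1 : ∀ z, E z ≤ K) {c η : ℝ} (hc0 : 0 ≤ c) (hcη : c ≤ η) :
    -(K * (η - c)^2 / 2) ≤ (∫ z in (0:ℝ)..η, (c - z) * E z) ∧
    (∫ z in (0:ℝ)..η, (c - z) * E z) ≤ K * c^2 / 2 := by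
  have hi : ∀ a b : ℝ, IntervalIntegrable (fun z => (c - z) * E z) volume a b :=
    fun a b => ((continuous_const.sub continuous_id).mul hE).intervalIntegrable a b
  have hiK : ∀ a b : ℝ, IntervalIntegrable (fun z => (c - z) * K) volume a b :=
    fun a b => ((continuous_const.sub continuous_id).mul continuous_const).intervalIntegrable a b
  have hsplit : (∫ z in (0:ℝ)..η, (c - z) * E z)
      = (∫ z in (0:ℝ)..c, (c - z) * E z) + ∫ z in c..η, (c - z) * E z :=
    (intervalIntegral.integral_add_adjacent_intervals (hi 0 c) (hi c η)).symm
  constructor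
  · have hB1 : 0 ≤ ∫ z in (0:ℝ)..c, (c - z) * E z := by
      apply intervalIntegral.integral_nonneg hc0
      intro x hx
      exact mul_nonneg (by linarith [hx.2]) (hE0 x)
    have hB2 : (∫ z in c..η, (c - z) * K) ≤ ∫ z in c..η, (c - z) * E z := by
      apply intervalIntegral.integral_mono_on hcη (hiK c η) (hi c η)
      intro x hx
      have hcx : c - x ≤ 0 := by linarith [hx.1]
      exact mul_le_mul_of_nonpos_left (hE1 x) hcx
    have hcomp : (∫ z in c..η, (c - z) * K) = -(K * (η - c)^2 / 2) := by
      rw [linear_int]; ring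
    rw [hsplit]
    rw [hcomp] at hB2
    linarith
  · have hA1 : (∫ z in (0:ℝ)..c, (c - z) * E z) ≤ ∫ z in (0:ℝ)..c, (c - z) * K := by
      apply intervalIntegral.integral_mono_on hc0 (hi 0 c) (hiK 0 c)
      intro x hx
      exact mul_le_mul_of_nonneg_left (hE1 x) (by linarith [hx.2])
    have hA2 : (∫ z in c..η, (c - z) * E z) ≤ 0 := by
      have := intervalIntegral.integral_mono_on hcη (hi c η)
        (_root_.intervalIntegrable_const (c := (0:ℝ)))
        (fun x hx => mul_nonpos_iff.2 (Or.inr ⟨by linarith [hx.1], hE0 x⟩))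
      simpa using this
    have hcomp : (∫ z in (0:ℝ)..c, (c - z) * K) = K * c^2 / 2 := by
      rw [linear_int]; ring
    rw [hsplit]
    linarith [hA1.trans_eq hcomp]

/-- Continuity of the operator S. -/
lemma Sop_cont {α m β : ℝ} {E : ℝ → ℝ} (hE : Continuous E) :
    Continuous fun η : ℝ => 1 + (m + 1) * (-(β * η) +
      ∫ z in (0:ℝ)..η, ((1 - α / 2) * η - z) * E z) := by
  have hi1 : ∀ a b : ℝ, IntervalIntegrable E volume a b := fun a b => hE.intervalIntegrable a b
  have hi2 : ∀ a b : ℝ, IntervalIntegrable (fun z => z * E z) volume a b :=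
    fun a b => (continuous_id.mul hE).intervalIntegrable a b
  have key : ∀ η : ℝ, (∫ z in (0:ℝ)..η, ((1 - α / 2) * η - z) * E z)
      = (1 - α / 2) * η * (∫ z in (0:ℝ)..η, E z) - ∫ z in (0:ℝ)..η, z * E z := by
    intro η
    rw [← intervalIntegral.integral_const_mul,
      ← intervalIntegral.integral_sub ((hi1 0 η).const_mul _) (hi2 0 η)]
    apply intervalIntegral.integral_congr
    intro z _
    ring
  simp only [key]
  apply continuous_const.add
  apply continuous_const.mul
  apply Continuous.add
  · exact (continuous_const.mul continuous_id).neg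
  · exact ((continuous_const.mul continuous_id).mul
      (intervalIntegral.continuous_primitive hi1 0)).sub
      (intervalIntegral.continuous_primitive hi2 0)

lemma alg_root1 {G t u s β m α η : ℝ}
    (ht : t^2 = m+1) (hu : u^2 = 2) (hs : s^2 = 2*β^2*(m+1)*G^2 - (2-α)^2*G)
    (hη : η*((2-α)^2*t) = 4*β*G*t - 2*u*s) :
    ((2-α)^2*t^2) * (8*G - 8*G*(m+1)*β*η + (m+1)*(2-α)^2*η^2) = 0 := by
  linear_combination (8*G*(2-α)^2 - 16*β^2*G^2*(m+1)) * ht + 4*(m+1)*s^2 * hu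
    + 8*(m+1)*hs + ((m+1)*(η*(2-α)^2*t + 4*β*G*t - 2*u*s) - 8*G*t*(m+1)*β) * hη

lemma alg_root2 {G t u s β m α η : ℝ}
    (ht : t^2 = m+1) (hu : u^2 = 2) (hs : s^2 = G*α^2 + 2*β^2*(m+1)*G^2)
    (hη : η*(α^2*t) = 2*u*s - 4*β*G*t) :
    (α^2*t^2) * (8*G - 8*G*(m+1)*β*η - (m+1)*α^2*η^2) = 0 := by
  linear_combination (8*G*α^2 + 16*β^2*G^2*(m+1)) * ht - 4*(m+1)*s^2 * hu
    - 8*(m+1)*hs + (-8*G*β*(m+1)*t - (m+1)*(η*α^2*t + 2*u*s - 4*β*G*t)) * hη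

set_option maxHeartbeats 1000000 in
/-- For β ≥ β₀ there exists η* ∈ [η₂(β), η₁(β)] with S_β(Y)(η*) = 0. -/
theorem Sop_has_zero (α m β : ℝ) (hα : 0 < α) (hα1 : α < 1) (hm : 1 < m)
    (hβ : β ≥ (2 - α) / Real.sqrt (2 * Real.Gamma (2 - α) * (m + 1)))
    (Y : ℝ → ℝ) (hY : Continuous Y) (hY0 : ∀ t, 0 ≤ Y t) (hY1 : ∀ t, Y t ≤ 1)
    (hYinit : Y 0 = 1) :
    ∃ ηs, eta2 α m β ≤ ηs ∧ ηs ≤ eta1 α m β ∧ Sop α m β Y ηs = 0 := by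
  have h2α : (0:ℝ) < 2 - α := by linarith
  have hm1 : (0:ℝ) < m + 1 := by linarith
  set G := Real.Gamma (2 - α) with hGdef
  have hG : 0 < G := Real.Gamma_pos_of_pos h2α
  -- the function W and its properties
  have hp : (0:ℝ) < 1 / (1 + m) := by positivity
  set W : ℝ → ℝ := fun t => Y t ^ (1 / (1 + m)) with hWdef
  have hWc : Continuous W := hY.rpow_const (fun t => Or.inr hp.le)
  have hW0 : ∀ t, 0 ≤ W t := fun t => Real.rpow_nonneg (hY0 t) _
  have hW1 : ∀ t, W t ≤ 1 := fun t => Real.rpow_le_one (hY0 t) (hY1 t) hp.le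
  obtain ⟨hEc, hEb⟩ := EK_props hα hα1 hWc hW0 hW1
  set E := EK α W with hEdef
  -- positivity of β
  have hβ0 : 0 < β :=
    lt_of_lt_of_le (div_pos h2α (Real.sqrt_pos.2 (by positivity))) hβ
  -- square root abbreviations
  set t := Real.sqrt (m + 1) with htdef
  have ht : t ^ 2 = m + 1 := Real.sq_sqrt (by linarith)
  have htpos : 0 < t := Real.sqrt_pos.2 hm1
  set u := Real.sqrt 2 with hudef
  have hu : u ^ 2 = 2 := Real.sq_sqrt (by norm_num)
  have hupos : 0 < u := Real.sqrt_pos.2 (by norm_num)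
  have hΓ3 : Real.Gamma (3 - α) = (2 - α) * G := by
    rw [hGdef, show (3:ℝ) - α = (2 - α) + 1 by ring]
    exact Real.Gamma_add_one (ne_of_gt h2α)
  -- the discriminant is nonnegative
  have hD1 : 0 ≤ 2 * β ^ 2 * (m + 1) * G ^ 2 - (2 - α) * Real.Gamma (3 - α) := by
    rw [hΓ3]
    have hvpos : 0 < Real.sqrt (2 * G * (m + 1)) := Real.sqrt_pos.2 (by positivity)
    have hv : Real.sqrt (2 * G * (m + 1)) ^ 2 = 2 * G * (m + 1) :=
      Real.sq_sqrt (by positivity)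
    have hbv : 2 - α ≤ β * Real.sqrt (2 * G * (m + 1)) := (div_le_iff₀ hvpos).mp hβ
    have h1 : (2 - α) ^ 2 ≤ β ^ 2 * (2 * G * (m + 1)) := by
      nlinarith only [hbv, hv, h2α]
    linarith only [mul_le_mul_of_nonneg_left h1 hG.le]
  set s1 := Real.sqrt (2 * β ^ 2 * (m + 1) * G ^ 2 - (2 - α) * Real.Gamma (3 - α)) with hs1def
  have hs1 : s1 ^ 2 = 2 * β ^ 2 * (m + 1) * G ^ 2 - (2 - α) ^ 2 * G := by
    rw [hs1def, Real.sq_sqrt hD1, hΓ3]; ring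
  have hs1nn : 0 ≤ s1 := Real.sqrt_nonneg _
  set s2 := Real.sqrt (G * (α ^ 2 + 2 * β ^ 2 * (m + 1) * G)) with hs2def
  have hs2 : s2 ^ 2 = G * α ^ 2 + 2 * β ^ 2 * (m + 1) * G ^ 2 := by
    rw [hs2def, Real.sq_sqrt (by positivity)]; ring
  have hs2nn : 0 ≤ s2 := Real.sqrt_nonneg _
  set η₁ := eta1 α m β with hη₁def
  set η₂ := eta2 α m β with hη₂def
  -- linear relations defining η₁ and η₂
  have hη1 : η₁ * ((2 - α) ^ 2 * t) = 4 * β * G * t - 2 * u * s1 := by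
    rw [hη₁def]; unfold eta1
    rw [← hGdef, ← hs1def, ← htdef, ← hudef]
    field_simp
  have hη2 : η₂ * (α ^ 2 * t) = 2 * u * s2 - 4 * β * G * t := by
    rw [hη₂def]; unfold eta2
    rw [← hGdef, ← hs2def, ← htdef, ← hudef]
    field_simp
  -- squared-comparison facts
  have e1 : (4 * β * G * t) ^ 2 = 16 * β ^ 2 * G ^ 2 * (m + 1) := by
    linear_combination 16 * β ^ 2 * G ^ 2 * ht
  have e3 : (2 * u * s1) ^ 2 = 16 * β ^ 2 * (m + 1) * G ^ 2 - 8 * (2 - α) ^ 2 * G := by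
    linear_combination 4 * s1 ^ 2 * hu + 8 * hs1
  have e2 : (2 * u * s2) ^ 2 = 8 * G * α ^ 2 + 16 * β ^ 2 * (m + 1) * G ^ 2 := by
    linear_combination 4 * s2 ^ 2 * hu + 8 * hs2
  have hnum1 : 2 * u * s1 ≤ 4 * β * G * t := by
    refine (abs_le_of_sq_le_sq' ?_ (by positivity)).2
    rw [e1, e3]
    linarith only [mul_nonneg (sq_nonneg (2 - α)) hG.le]
  have hnum2 : 4 * β * G * t ≤ 2 * u * s2 := by
    refine (abs_le_of_sq_le_sq' ?_ (by positivity)).2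
    rw [e1, e2]
    linarith only [mul_nonneg hG.le (sq_nonneg α)]
  -- nonnegativity of the roots
  have hη1nn : 0 ≤ η₁ := by
    have h := (eq_div_iff (by positivity : ((2 - α) ^ 2 * t) ≠ 0)).mpr hη1
    rw [h]
    exact div_nonneg (by linarith) (by positivity)
  have hη2nn : 0 ≤ η₂ := by
    have h := (eq_div_iff (by positivity : (α ^ 2 * t) ≠ 0)).mpr hη2
    rw [h]
    exact div_nonneg (by linarith) (by positivity)
  -- cleared root equations
  have h1 : 8 * G - 8 * G * (m + 1) * β * η₁ + (m + 1) * (2 - α) ^ 2 * η₁ ^ 2 = 0 := by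
    have hQ := alg_root1 ht hu hs1 hη1
    exact (mul_eq_zero.mp hQ).resolve_left (by positivity)
  have h2 : 8 * G - 8 * G * (m + 1) * β * η₂ - (m + 1) * α ^ 2 * η₂ ^ 2 = 0 := by
    have hQ := alg_root2 ht hu hs2 hη2
    exact (mul_eq_zero.mp hQ).resolve_left (by positivity)
  -- ordering of the roots
  have hle : η₂ ≤ η₁ := by
    by_contra hcon
    push_neg at hcon
    have p1 : 0 < 8 * G * (m + 1) * β * (η₂ - η₁) :=
      mul_pos (mul_pos (mul_pos (by linarith only [hG] : (0:ℝ) < 8 * G) hm1) hβ0)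
        (sub_pos.mpr hcon)
    have p3 : 0 ≤ (m + 1) * (2 - α) ^ 2 * η₁ ^ 2 := by positivity
    have p4 : 0 ≤ (m + 1) * α ^ 2 * η₂ ^ 2 := by positivity
    linarith only [h1, h2, p1, p3, p4]
  -- root equations in the sandwich form
  have hg1 : 1 + (m + 1) * (-(β * η₁) + 1 / G * ((1 - α / 2) * η₁) ^ 2 / 2) = 0 := by
    have hr : 1 + (m + 1) * (-(β * η₁) + 1 / G * ((1 - α / 2) * η₁) ^ 2 / 2)
        = (8 * G - 8 * G * (m + 1) * β * η₁ + (m + 1) * (2 - α) ^ 2 * η₁ ^ 2) / (8 * G) := by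
      field_simp
      ring
    rw [hr, h1, zero_div]
  have hg2 : 1 + (m + 1) * (-(β * η₂) + -(1 / G * (η₂ - (1 - α / 2) * η₂) ^ 2 / 2)) = 0 := by
    have hr : 1 + (m + 1) * (-(β * η₂) + -(1 / G * (η₂ - (1 - α / 2) * η₂) ^ 2 / 2))
        = (8 * G - 8 * G * (m + 1) * β * η₂ - (m + 1) * α ^ 2 * η₂ ^ 2) / (8 * G) := by
      field_simp
      ring
    rw [hr, h2, zero_div]
  -- sandwich bounds for Sop
  have hE0 : ∀ z, 0 ≤ E z := fun z => (hEb z).1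
  have hE1 : ∀ z, E z ≤ 1 / G := fun z => (hEb z).2
  have hSle : Sop α m β Y η₁ ≤ 0 := by
    have hc0 : 0 ≤ (1 - α / 2) * η₁ := mul_nonneg (by linarith) hη1nn
    have hcη : (1 - α / 2) * η₁ ≤ η₁ := by linarith only [mul_nonneg hα.le hη1nn]
    obtain ⟨-, hup⟩ := key_bounds hEc hE0 hE1 hc0 hcη
    have : Sop α m β Y η₁ ≤ 1 + (m + 1) * (-(β * η₁) + 1 / G * ((1 - α / 2) * η₁) ^ 2 / 2) := by
      unfold Sop
      rw [← hWdef, ← hEdef]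
      have h := mul_le_mul_of_nonneg_left (add_le_add_left hup (-(β * η₁))) hm1.le
      linarith only [h]
    linarith only [this, hg1.le]
  have hSge : 0 ≤ Sop α m β Y η₂ := by
    have hc0 : 0 ≤ (1 - α / 2) * η₂ := mul_nonneg (by linarith) hη2nn
    have hcη : (1 - α / 2) * η₂ ≤ η₂ := by linarith only [mul_nonneg hα.le hη2nn]
    obtain ⟨hlow, -⟩ := key_bounds hEc hE0 hE1 hc0 hcη
    have : 1 + (m + 1) * (-(β * η₂) + -(1 / G * (η₂ - (1 - α / 2) * η₂) ^ 2 / 2))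
        ≤ Sop α m β Y η₂ := by
      unfold Sop
      rw [← hWdef, ← hEdef]
      have h := mul_le_mul_of_nonneg_left (add_le_add_left hlow (-(β * η₂))) hm1.le
      linarith only [h]
    linarith only [this, hg2.ge]
  -- continuity and the intermediate value theorem
  have hcontS : Continuous (Sop α m β Y) := by
    unfold Sop
    rw [← hWdef, ← hEdef]
    exact Sop_cont hEc
  obtain ⟨ηs, hmem, hval⟩ :=
    intermediate_value_Icc' hle hcontS.continuousOn ⟨hSle, hSge⟩
  exact ⟨ηs, hmem.1, hmem.2, hval⟩
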